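/- For any field k and any invertible d×d matrix A over k, consider the linear endomorphism T of M_d(k) given by T(X) = A⁻¹ Xᵀ A. Then Tr(T) = Tr(A⁻¹ Aᵀ). -/

import Mathlib

open Matrix

theorem stmt_13 {k : Type*} [Field k] (d : ℕ)
    (A : Matrix (Fin d) (Fin d) k) (hA : IsUnit A)
    (T : Matrix (Fin d) (Fin d) k →ₗ[k] Matrix (Fin d) (Fin d) k)
    (hT : ∀ X : Matrix (Fin d) (Fin d) k, T X = A⁻¹ * Xᵀ * A) :
    LinearMap.trace k (Matrix (Fin d) (Fin d) k) T = Matrix.trace (A⁻¹ * Aᵀ) := by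
  classical
  have hrepr : ∀ (M : Matrix (Fin d) (Fin d) k) (i j : Fin d),
      (Matrix.stdBasis k (Fin d) (Fin d)).repr M (i, j) = M i j := by
    intro M i j
    simp [Matrix.stdBasis, Pi.basis_repr, Pi.basisFun_repr]
  rw [LinearMap.trace_eq_matrix_trace k (Matrix.stdBasis k (Fin d) (Fin d))]
  rw [Matrix.trace, Matrix.trace]
  rw [Fintype.sum_prod_type]
  simp only [Matrix.diag, LinearMap.toMatrix_apply, Matrix.stdBasis_eq_single, hrepr,
    hT, Matrix.mul_apply, Matrix.single,
    Matrix.of_apply, Matrix.transpose_apply]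
  refine Finset.sum_congr rfl fun i _ => Finset.sum_congr rfl fun j _ => ?_
  simp [ite_and, Finset.sum_ite_eq, Finset.sum_ite_eq', mul_comm]
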